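/- Let A be an abelian group, E : A → ℝ a group homomorphism, and G ⊆ A a monoid of curve classes. For each a ∈ A let C(a)_* be a ℤ-graded real vector space, and suppose given: degree 0 bilinear products • : C(a)_i × C(b)_j → C(a+b)_{i+j} which are associative; degree −1 linear maps ∂ : C(a)_* → C(a)_{*−1} (set m_{1,0} := ∂) and m_{1,β} : C(a)_* → C(a+β)_{*−1} for each β ∈ G⁺; and elements m_{0,β} ∈ C(β)₋₂ for β ∈ G⁺ (set m_{0,0} := 0), satisfying for each β ∈ G (all sums finite): (a) Σ_{β₁,β₂ ∈ G, β₁+β₂=β} m_{1,β₁}(m_{0,β₂}) = 0; (b) Σ_{β₁,β₂ ∈ G, β₁+β₂=β} m_{1,β₁}(m_{1,β₂}(α)) = m_{0,β}•α − α•m_{0,β} for every a ∈ A and every α ∈ C(a); (c) m_{1,β}(α₁•α₂) = m_{1,β}(α₁)•α₂ + (−1)^{|α₁|} α₁•m_{1,β}(α₂) for homogeneous α₁, α₂. Assume moreover that H₋₂(C(β), ∂) = 0 for every β ∈ G⁺, i.e. every x ∈ C(β)₋₂ with ∂x = 0 lies in ∂(C(β)₋₁). Then there exists a family b = (b(β))_{β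 ∈ G⁺} with b(β) ∈ C(β)₋₁ such that for every β ∈ G⁺: m_{0,β} + Σ_{β₁ ∈ G, β₂ ∈ G⁺, β₁+β₂=β} m_{1,β₁}(b(β₂)) + Σ_{β₁,β₂ ∈ G⁺, β₁+β₂=β} b(β₁)•b(β₂) = 0. -/

import Mathlib

/-- A submonoid `G` of an abelian group `A` with energy homomorphism `E : A →+ ℝ` is a
*monoid of curve classes* if energies of its elements are nonnegative and vanish only at
`0`, the image `E(G)` has no accumulation point in `ℝ`, and each energy level contains
only finitely many classes. -/
structure IsCurveClassMonoid {A : Type} [AddCommGroup A] (E : A →+ ℝ) (G : Set A) : Prop where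
  zero_mem : (0 : A) ∈ G
  add_mem : ∀ ⦃β₁ β₂ : A⦄, β₁ ∈ G → β₂ ∈ G → β₁ + β₂ ∈ G
  nonneg : ∀ β ∈ G, 0 ≤ E β
  energy_eq_zero : ∀ β ∈ G, E β = 0 → β = 0
  discrete : ∀ x : ℝ, ¬ AccPt x (Filter.principal (E '' G))
  finite_fibers : ∀ c : ℝ, {β ∈ G | E β = c}.Finite

namespace BChainAux

open Classical

variable {A : Type} [AddCommGroup A] {V : Type} [AddCommGroup V] [Module ℝ V]

/-- finiteness of sublevel sets -/
theorem finite_le (E : A →+ ℝ) (G : Set A) (hG : IsCurveClassMonoid E G) (c : ℝ) :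
    {x | x ∈ G ∧ E x ≤ c}.Finite := by
  by_contra hinf
  rw [← Set.not_infinite, not_not] at hinf
  have himg : (E '' {x | x ∈ G ∧ E x ≤ c}).Infinite := by
    intro hfin
    have : {x | x ∈ G ∧ E x ≤ c} ⊆ ⋃ y ∈ E '' {x | x ∈ G ∧ E x ≤ c}, {β ∈ G | E β = y} := by
      intro x hx
      simp only [Set.mem_iUnion]
      exact ⟨E x, ⟨x, hx, rfl⟩, hx.1, rfl⟩
    exact hinf ((hfin.biUnion (fun y _ => hG.finite_fibers y)).subset this)
  have hsub : E '' {x | x ∈ G ∧ E x ≤ c} ⊆ Set.Icc 0 c := by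
    rintro y ⟨x, ⟨hxG, hxc⟩, rfl⟩
    exact ⟨hG.nonneg x hxG, hxc⟩
  obtain ⟨x, -, hx⟩ := himg.exists_accPt_of_subset_isCompact isCompact_Icc hsub
  exact hG.discrete x (hx.mono (Filter.principal_mono.2 (Set.image_mono (f := E) fun y hy => hy.1)))

/-- number of classes of strictly smaller energy -/
noncomputable def ncB (E : A →+ ℝ) (G : Set A) (β : A) : ℕ :=
  {x | x ∈ G ∧ E x < E β}.ncard

theorem ncB_lt (E : A →+ ℝ) (G : Set A) (hG : IsCurveClassMonoid E G) {γ β : A}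
    (hγ : γ ∈ G) (hE : E γ < E β) : ncB E G γ < ncB E G β := by
  have hfin : {x | x ∈ G ∧ E x < E β}.Finite :=
    (finite_le E G hG (E β)).subset (fun x hx => ⟨hx.1, le_of_lt hx.2⟩)
  apply Set.ncard_lt_ncard _ hfin
  constructor
  · exact fun x hx => ⟨hx.1, lt_trans hx.2 hE⟩
  · intro hsub
    exact absurd ((hsub ⟨hγ, hE⟩).2) (lt_irrefl _)

/-- the obstruction class -/
noncomputable def obstr (G : Set A) (mul : V →ₗ[ℝ] V →ₗ[ℝ] V) (m₁ : A → (V →ₗ[ℝ] V))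
    (m₀ : A → V) (prev : A → V) (β : A) : V :=
  m₀ β
    + (∑ᶠ p ∈ {q : A × A | q.1 ∈ G ∧ q.1 ≠ 0 ∧ q.2 ∈ G ∧ q.2 ≠ 0 ∧ q.1 + q.2 = β},
        m₁ p.1 (prev p.2))
    + (∑ᶠ p ∈ {q : A × A | q.1 ∈ G ∧ q.1 ≠ 0 ∧ q.2 ∈ G ∧ q.2 ≠ 0 ∧ q.1 + q.2 = β},
        mul (prev p.1) (prev p.2))

/-- the bounding chain, by well-founded recursion -/
noncomputable def bChain (E : A →+ ℝ) (G : Set A) (𝒞 : A → ℤ → Submodule ℝ V)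
    (mul : V →ₗ[ℝ] V →ₗ[ℝ] V) (d : V →ₗ[ℝ] V) (m₁ : A → (V →ₗ[ℝ] V)) (m₀ : A → V) :
    A → V :=
  WellFounded.fix (InvImage.wf (ncB E G) Nat.lt_wfRel.wf) fun β prev =>
    let prev' : A → V := fun γ => if h : ncB E G γ < ncB E G β then prev γ h else 0
    if h : ∃ y, y ∈ 𝒞 β (-1) ∧ d y = -(obstr G mul m₁ m₀ prev' β) then h.choose else 0

theorem bChain_eq (E : A →+ ℝ) (G : Set A) (𝒞 : A → ℤ → Submodule ℝ V)
    (mul : V →ₗ[ℝ] V →ₗ[ℝ] V) (d : V →ₗ[ℝ] V) (m₁ : A → (V →ₗ[ℝ] V)) (m₀ : A → V) (β : A) :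
    bChain E G 𝒞 mul d m₁ m₀ β =
      if h : ∃ y, y ∈ 𝒞 β (-1) ∧ d y = -(obstr G mul m₁ m₀
          (fun γ => if h' : ncB E G γ < ncB E G β then bChain E G 𝒞 mul d m₁ m₀ γ else 0) β)
        then h.choose else 0 := by
  conv_lhs => rw [bChain, WellFounded.fix_eq]
  rfl

/-- convert a finsum over a finite set to a Finset sum -/
theorem finsum_eq_sum_toFinset {α M : Type*} [AddCommMonoid M] (f : α → M) {S : Set α}
    (hS : S.Finite) : (∑ᶠ i ∈ S, f i) = ∑ i ∈ hS.toFinset, f i := by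
  rw [← finsum_mem_coe_finset, hS.coe_toFinset]

end BChainAux
/-- Existence of a bounding chain for a `G`-gapped curved dg associative deformation whose
homology in degree `−2` vanishes on each nonzero class: there is a family
`b(β) ∈ C(β)₋₁`, `β ∈ G⁺`, satisfying the Maurer–Cartan equation
`m₀,β + Σ m₁,β₁(b(β₂)) + Σ b(β₁)•b(β₂) = 0` for every `β ∈ G⁺`. -/
theorem exists_boundingChain
    {A : Type} [AddCommGroup A] [DecidableEq A] (E : A →+ ℝ) (G : Set A)
    (hG : IsCurveClassMonoid E G)
    (V : Type) [AddCommGroup V] [Module ℝ V]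
    (𝒞 : A → ℤ → Submodule ℝ V)
    (hInternal : DirectSum.IsInternal fun p : A × ℤ => 𝒞 p.1 p.2)
    (mul : V →ₗ[ℝ] V →ₗ[ℝ] V)
    (hmul_deg : ∀ (a b : A) (i j : ℤ), ∀ x ∈ 𝒞 a i, ∀ y ∈ 𝒞 b j,
      mul x y ∈ 𝒞 (a + b) (i + j))
    (hassoc : ∀ x y z : V, mul (mul x y) z = mul x (mul y z))
    (d : V →ₗ[ℝ] V)
    (hd_deg : ∀ (a : A) (i : ℤ), ∀ x ∈ 𝒞 a i, d x ∈ 𝒞 a (i - 1))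
    (m₁ : A → (V →ₗ[ℝ] V))
    (hm₁_zero : m₁ 0 = d)
    (hm₁_deg : ∀ β, β ∈ G → β ≠ 0 → ∀ (a : A) (i : ℤ), ∀ x ∈ 𝒞 a i,
      m₁ β x ∈ 𝒞 (a + β) (i - 1))
    (m₀ : A → V)
    (hm₀_zero : m₀ 0 = 0)
    (hm₀_mem : ∀ β, β ∈ G → β ≠ 0 → m₀ β ∈ 𝒞 β (-2))
    -- (a) `m₁(m₀) = 0`
    (ha : ∀ β ∈ G,
      (∑ᶠ p ∈ {q : A × A | q.1 ∈ G ∧ q.2 ∈ G ∧ q.1 + q.2 = β}, m₁ p.1 (m₀ p.2)) = 0)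
    -- (b) `m₁²(α) = m₀•α − α•m₀`
    (hb : ∀ β ∈ G, ∀ (a : A) (i : ℤ), ∀ α ∈ 𝒞 a i,
      (∑ᶠ p ∈ {q : A × A | q.1 ∈ G ∧ q.2 ∈ G ∧ q.1 + q.2 = β}, m₁ p.1 (m₁ p.2 α))
        = mul (m₀ β) α - mul α (m₀ β))
    -- (c) each `m₁,β` is a graded derivation of `•`
    (hc : ∀ β ∈ G, ∀ (a₁ a₂ : A) (i j : ℤ), ∀ α₁ ∈ 𝒞 a₁ i, ∀ α₂ ∈ 𝒞 a₂ j,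
      m₁ β (mul α₁ α₂) = mul (m₁ β α₁) α₂ + ((-1 : ℝ) ^ i) • mul α₁ (m₁ β α₂))
    -- vanishing of the degree `−2` homology of `(C(β), ∂)` for `β ∈ G⁺`
    (hH : ∀ β, β ∈ G → β ≠ 0 → ∀ x ∈ 𝒞 β (-2), d x = 0 → ∃ y ∈ 𝒞 β (-1), d y = x) :
    ∃ b : A → V, (∀ β, β ∈ G → β ≠ 0 → b β ∈ 𝒞 β (-1)) ∧
      ∀ β, β ∈ G → β ≠ 0 →
        m₀ β
          + (∑ᶠ p ∈ {q : A × A | q.1 ∈ G ∧ q.2 ∈ G ∧ q.2 ≠ 0 ∧ q.1 + q.2 = β},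
              m₁ p.1 (b p.2))
          + (∑ᶠ p ∈ {q : A × A |
                q.1 ∈ G ∧ q.1 ≠ 0 ∧ q.2 ∈ G ∧ q.2 ≠ 0 ∧ q.1 + q.2 = β},
              mul (b p.1) (b p.2)) = 0 := by
  -- basic energy facts
  have hEpos : ∀ γ, γ ∈ G → γ ≠ 0 → 0 < E γ := fun γ h1 h2 =>
    lt_of_le_of_ne (hG.nonneg γ h1) (fun h => h2 (hG.energy_eq_zero γ h1 h.symm))
  have hsum_ne : ∀ x y : A, x ∈ G → y ∈ G → y ≠ 0 → x + y ≠ 0 := by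
    intro x y hx hy hy0 h0
    have h1 : E x + E y = 0 := by rw [← map_add, h0, map_zero]
    have := hG.nonneg x hx
    have := hEpos y hy hy0
    linarith
  have hfinL : ∀ c : ℝ, {x | x ∈ G ∧ E x ≤ c}.Finite := BChainAux.finite_le E G hG
  have hfinSa : ∀ γ : A, ({q : A × A | q.1 ∈ G ∧ q.2 ∈ G ∧ q.1 + q.2 = γ}).Finite := by
    intro γ
    apply ((hfinL (E γ)).prod (hfinL (E γ))).subset
    rintro ⟨x, y⟩ ⟨h1, h2, h3⟩
    have hxy : E x + E y = E γ := by rw [← map_add, h3]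
    have := hG.nonneg x h1
    have := hG.nonneg y h2
    exact ⟨⟨h1, by linarith⟩, ⟨h2, by linarith⟩⟩
  have hfinSm : ∀ γ : A,
      ({q : A × A | q.1 ∈ G ∧ q.2 ∈ G ∧ q.2 ≠ 0 ∧ q.1 + q.2 = γ}).Finite := fun γ =>
    (hfinSa γ).subset (fun q hq => ⟨hq.1, hq.2.1, hq.2.2.2⟩)
  have hfinSp : ∀ γ : A,
      ({q : A × A | q.1 ∈ G ∧ q.1 ≠ 0 ∧ q.2 ∈ G ∧ q.2 ≠ 0 ∧ q.1 + q.2 = γ}).Finite := fun γ =>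
    (hfinSa γ).subset (fun q hq => ⟨hq.1, hq.2.2.1, hq.2.2.2.2⟩)
  -- Finset versions of the index sets
  obtain ⟨PA, hPAmem, hconvA⟩ : ∃ F : A → Finset (A × A),
      (∀ γ q, q ∈ F γ ↔ (q.1 ∈ G ∧ q.2 ∈ G ∧ q.1 + q.2 = γ)) ∧
      (∀ γ (f : A × A → V),
        (∑ᶠ p ∈ {q : A × A | q.1 ∈ G ∧ q.2 ∈ G ∧ q.1 + q.2 = γ}, f p) = ∑ p ∈ F γ, f p) :=
    ⟨fun γ => (hfinSa γ).toFinset, fun γ q => (hfinSa γ).mem_toFinset,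
      fun γ f => BChainAux.finsum_eq_sum_toFinset f (hfinSa γ)⟩
  obtain ⟨PM, hPMmem, hconvM⟩ : ∃ F : A → Finset (A × A),
      (∀ γ q, q ∈ F γ ↔ (q.1 ∈ G ∧ q.2 ∈ G ∧ q.2 ≠ 0 ∧ q.1 + q.2 = γ)) ∧
      (∀ γ (f : A × A → V),
        (∑ᶠ p ∈ {q : A × A | q.1 ∈ G ∧ q.2 ∈ G ∧ q.2 ≠ 0 ∧ q.1 + q.2 = γ}, f p)
          = ∑ p ∈ F γ, f p) :=
    ⟨fun γ => (hfinSm γ).toFinset, fun γ q => (hfinSm γ).mem_toFinset,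
      fun γ f => BChainAux.finsum_eq_sum_toFinset f (hfinSm γ)⟩
  obtain ⟨PP, hPPmem, hconvP⟩ : ∃ F : A → Finset (A × A),
      (∀ γ q, q ∈ F γ ↔ (q.1 ∈ G ∧ q.1 ≠ 0 ∧ q.2 ∈ G ∧ q.2 ≠ 0 ∧ q.1 + q.2 = γ)) ∧
      (∀ γ (f : A × A → V),
        (∑ᶠ p ∈ {q : A × A | q.1 ∈ G ∧ q.1 ≠ 0 ∧ q.2 ∈ G ∧ q.2 ≠ 0 ∧ q.1 + q.2 = γ}, f p)
          = ∑ p ∈ F γ, f p) :=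
    ⟨fun γ => (hfinSp γ).toFinset, fun γ q => (hfinSp γ).mem_toFinset,
      fun γ f => BChainAux.finsum_eq_sum_toFinset f (hfinSp γ)⟩
  have hPPfacts : ∀ γ, ∀ p ∈ PP γ, p.1 ∈ G ∧ p.1 ≠ 0 ∧ p.2 ∈ G ∧ p.2 ≠ 0 ∧ p.1 + p.2 = γ
      ∧ E p.1 < E γ ∧ E p.2 < E γ := by
    intro γ p hp
    rw [hPPmem] at hp
    obtain ⟨h1, h2, h3, h4, h5⟩ := hp
    have e1 : 0 < E p.1 := hEpos _ h1 h2
    have e2 : 0 < E p.2 := hEpos _ h3 h4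
    have e3 : E p.1 + E p.2 = E γ := by rw [← map_add, h5]
    exact ⟨h1, h2, h3, h4, h5, by linarith, by linarith⟩
  have h0γnotPP : ∀ γ : A, ((0 : A), γ) ∉ PP γ := by
    intro γ h
    rw [hPPmem] at h
    exact h.2.1 rfl
  have hPMins : ∀ γ, γ ∈ G → γ ≠ 0 → PM γ = insert ((0 : A), γ) (PP γ) := by
    intro γ h1 h2
    ext q
    rw [Finset.mem_insert, hPMmem, hPPmem]
    constructor
    · rintro ⟨k1, k2, k3, k4⟩
      by_cases h0 : q.1 = 0
      · left
        have : q.2 = γ := by rw [← k4, h0, zero_add]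
        exact Prod.ext h0 this
      · right; exact ⟨k1, h0, k2, k3, k4⟩
    · rintro (h | ⟨k1, k2, k3, k4, k5⟩)
      · rw [h]; exact ⟨hG.zero_mem, h1, h2, zero_add γ⟩
      · exact ⟨k1, k3, k4, k5⟩
  -- the bounding chain
  set b : A → V := BChainAux.bChain E G 𝒞 mul d m₁ m₀ with hbb
  have hpow : ((-1 : ℝ) ^ (-1 : ℤ)) = -1 := by norm_num
  have hder : ∀ γ, γ ∈ G → ∀ (x z : A) (u v : V), u ∈ 𝒞 x (-1) → v ∈ 𝒞 z (-1) →
      m₁ γ (mul u v) = mul (m₁ γ u) v - mul u (m₁ γ v) := by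
    intro γ hγ x z u v hu hv
    rw [hc γ hγ x z (-1) (-1) u hu v hv, hpow, neg_one_smul, ← sub_eq_add_neg]
  -- main induction
  have main : ∀ N : ℕ, ∀ β, BChainAux.ncB E G β < N → β ∈ G → β ≠ 0 →
      b β ∈ 𝒞 β (-1) ∧
      m₀ β + (∑ p ∈ PM β, m₁ p.1 (b p.2)) + (∑ p ∈ PP β, mul (b p.1) (b p.2)) = 0 := by
    intro N
    induction N with
    | zero => intro β h; exact absurd h (Nat.not_lt_zero _)
    | succ N IH =>
      intro β hβN hβG hβ0
      have hIH : ∀ γ, γ ∈ G → γ ≠ 0 → E γ < E β →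
          b γ ∈ 𝒞 γ (-1) ∧
          m₀ γ + (∑ p ∈ PM γ, m₁ p.1 (b p.2)) + (∑ p ∈ PP γ, mul (b p.1) (b p.2)) = 0 :=
        fun γ h1 h2 h3 => IH γ
          (lt_of_lt_of_le (BChainAux.ncB_lt E G hG h1 h3) (Nat.lt_succ_iff.mp hβN)) h1 h2
      -- d ∘ b at lower energy
      have hdb : ∀ γ, γ ∈ G → γ ≠ 0 → E γ < E β →
          d (b γ) = -m₀ γ - (∑ q ∈ PP γ, m₁ q.1 (b q.2))
            - ∑ q ∈ PP γ, mul (b q.1) (b q.2) := by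
        intro γ h1 h2 h3
        have h := (hIH γ h1 h2 h3).2
        rw [hPMins γ h1 h2, Finset.sum_insert (h0γnotPP γ)] at h
        simp only [hm₁_zero] at h
        calc d (b γ)
            = (m₀ γ + (d (b γ) + ∑ q ∈ PP γ, m₁ q.1 (b q.2))
                + ∑ q ∈ PP γ, mul (b q.1) (b q.2))
              - m₀ γ - (∑ q ∈ PP γ, m₁ q.1 (b q.2))
              - ∑ q ∈ PP γ, mul (b q.1) (b q.2) := by abel
          _ = _ := by rw [h]; abel
      have hm0eq : ∀ γ, γ ∈ G → γ ≠ 0 → E γ < E β →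
          m₀ γ = -(∑ q ∈ PM γ, m₁ q.1 (b q.2)) - ∑ q ∈ PP γ, mul (b q.1) (b q.2) := by
        intro γ h1 h2 h3
        have h := (hIH γ h1 h2 h3).2
        calc m₀ γ
            = (m₀ γ + (∑ q ∈ PM γ, m₁ q.1 (b q.2)) + ∑ q ∈ PP γ, mul (b q.1) (b q.2))
              - (∑ q ∈ PM γ, m₁ q.1 (b q.2)) - ∑ q ∈ PP γ, mul (b q.1) (b q.2) := by abel
          _ = _ := by rw [h]; abel
      -- triple index sets
      have hfinSt : ({t : A × A × A | t.1 ∈ G ∧ t.1 ≠ 0 ∧ t.2.1 ∈ G ∧ t.2.1 ≠ 0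
          ∧ t.2.2 ∈ G ∧ t.2.2 ≠ 0 ∧ t.1 + t.2.1 + t.2.2 = β}).Finite := by
        apply ((hfinL (E β)).prod ((hfinL (E β)).prod (hfinL (E β)))).subset
        rintro ⟨x, y, z⟩ ⟨h1, _, h3, _, h5, _, h7⟩
        have hxyz : E x + E y + E z = E β := by rw [← map_add, ← map_add, h7]
        have := hG.nonneg x h1
        have := hG.nonneg y h3
        have := hG.nonneg z h5
        exact ⟨⟨h1, by linarith⟩, ⟨h3, by linarith⟩, ⟨h5, by linarith⟩⟩
      have hfinStC : ({t : A × A × A | t.1 ∈ G ∧ t.2.1 ∈ G ∧ t.2.2 ∈ G ∧ t.2.2 ≠ 0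
          ∧ ¬(t.1 = 0 ∧ t.2.1 = 0) ∧ t.1 + t.2.1 + t.2.2 = β}).Finite := by
        apply ((hfinL (E β)).prod ((hfinL (E β)).prod (hfinL (E β)))).subset
        rintro ⟨x, y, z⟩ ⟨h1, h3, h5, _, _, h7⟩
        have hxyz : E x + E y + E z = E β := by rw [← map_add, ← map_add, h7]
        have := hG.nonneg x h1
        have := hG.nonneg y h3
        have := hG.nonneg z h5
        exact ⟨⟨h1, by linarith⟩, ⟨h3, by linarith⟩, ⟨h5, by linarith⟩⟩
      obtain ⟨TT, hTTmem⟩ : ∃ F : Finset (A × A × A),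
          ∀ t, t ∈ F ↔ (t.1 ∈ G ∧ t.1 ≠ 0 ∧ t.2.1 ∈ G ∧ t.2.1 ≠ 0
            ∧ t.2.2 ∈ G ∧ t.2.2 ≠ 0 ∧ t.1 + t.2.1 + t.2.2 = β) :=
        ⟨hfinSt.toFinset, fun t => hfinSt.mem_toFinset⟩
      obtain ⟨TC, hTCmem⟩ : ∃ F : Finset (A × A × A),
          ∀ t, t ∈ F ↔ (t.1 ∈ G ∧ t.2.1 ∈ G ∧ t.2.2 ∈ G ∧ t.2.2 ≠ 0
            ∧ ¬(t.1 = 0 ∧ t.2.1 = 0) ∧ t.1 + t.2.1 + t.2.2 = β) :=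
        ⟨hfinStC.toFinset, fun t => hfinStC.mem_toFinset⟩
      -- flattening lemmas
      have F1 : ∀ f : A → A → A → V,
          (∑ p ∈ PP β, ∑ q ∈ PP p.2, f p.1 q.1 q.2) = ∑ t ∈ TT, f t.1 t.2.1 t.2.2 := by
        intro f
        rw [Finset.sum_sigma' (PP β) (fun p => PP p.2) (fun p q => f p.1 q.1 q.2)]
        refine Finset.sum_nbij' (fun x => (x.1.1, x.2.1, x.2.2))
          (fun t => ⟨(t.1, t.2.1 + t.2.2), (t.2.1, t.2.2)⟩) ?_ ?_ ?_ ?_ ?_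
        · rintro ⟨⟨a, z⟩, u, v⟩ hx
          rw [Finset.mem_sigma] at hx
          obtain ⟨k1, k2, k3, k4, k5⟩ := (hPPmem _ _).1 hx.1
          obtain ⟨l1, l2, l3, l4, l5⟩ := (hPPmem _ _).1 hx.2
          rw [hTTmem]
          dsimp only at *
          exact ⟨k1, k2, l1, l2, l3, l4, by rw [add_assoc, l5, k5]⟩
        · rintro ⟨a, u, v⟩ ht
          rw [hTTmem] at ht
          obtain ⟨t1, t2, t3, t4, t5, t6, t7⟩ := ht
          dsimp only at *
          rw [Finset.mem_sigma]
          constructor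
          · rw [hPPmem]
            exact ⟨t1, t2, hG.add_mem t3 t5, hsum_ne _ _ t3 t5 t6,
              by rw [← add_assoc]; exact t7⟩
          · rw [hPPmem]; exact ⟨t3, t4, t5, t6, rfl⟩
        · rintro ⟨⟨a, z⟩, u, v⟩ hx
          rw [Finset.mem_sigma] at hx
          have huv : u + v = z := ((hPPmem _ _).1 hx.2).2.2.2.2
          dsimp only at *
          subst huv
          rfl
        · rintro ⟨a, u, v⟩ ht; rfl
        · rintro ⟨⟨a, z⟩, u, v⟩ hx; rfl
      have F2 : ∀ f : A → A → A → V,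
          (∑ p ∈ PP β, ∑ q ∈ PP p.1, f q.1 q.2 p.2) = ∑ t ∈ TT, f t.1 t.2.1 t.2.2 := by
        intro f
        rw [Finset.sum_sigma' (PP β) (fun p => PP p.1) (fun p q => f q.1 q.2 p.2)]
        refine Finset.sum_nbij' (fun x => (x.2.1, x.2.2, x.1.2))
          (fun t => ⟨(t.1 + t.2.1, t.2.2), (t.1, t.2.1)⟩) ?_ ?_ ?_ ?_ ?_
        · rintro ⟨⟨a, z⟩, u, v⟩ hx
          rw [Finset.mem_sigma] at hx
          obtain ⟨k1, k2, k3, k4, k5⟩ := (hPPmem _ _).1 hx.1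
          obtain ⟨l1, l2, l3, l4, l5⟩ := (hPPmem _ _).1 hx.2
          rw [hTTmem]
          dsimp only at *
          exact ⟨l1, l2, l3, l4, k3, k4, by rw [l5, k5]⟩
        · rintro ⟨a, u, v⟩ ht
          rw [hTTmem] at ht
          obtain ⟨t1, t2, t3, t4, t5, t6, t7⟩ := ht
          dsimp only at *
          rw [Finset.mem_sigma]
          constructor
          · rw [hPPmem]
            exact ⟨hG.add_mem t1 t3, hsum_ne _ _ t1 t3 t4, t5, t6, t7⟩
          · rw [hPPmem]; exact ⟨t1, t2, t3, t4, rfl⟩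
        · rintro ⟨⟨a, z⟩, u, v⟩ hx
          rw [Finset.mem_sigma] at hx
          have huv : u + v = a := ((hPPmem _ _).1 hx.2).2.2.2.2
          dsimp only at *
          subst huv
          rfl
        · rintro ⟨a, u, v⟩ ht; rfl
        · rintro ⟨⟨a, z⟩, u, v⟩ hx; rfl
      have Fswap : ∀ f : A → A → A → V,
          (∑ t ∈ TT, f t.1 t.2.1 t.2.2) = ∑ t ∈ TT, f t.2.1 t.1 t.2.2 := by
        intro f
        refine Finset.sum_nbij' (fun t => (t.2.1, t.1, t.2.2)) (fun t => (t.2.1, t.1, t.2.2))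
          ?_ ?_ ?_ ?_ ?_
        · rintro ⟨a, u, v⟩ ht
          rw [hTTmem] at ht ⊢
          obtain ⟨t1, t2, t3, t4, t5, t6, t7⟩ := ht
          dsimp only at *
          exact ⟨t3, t4, t1, t2, t5, t6, by rw [add_comm a u] at t7; exact t7⟩
        · rintro ⟨a, u, v⟩ ht
          rw [hTTmem] at ht ⊢
          obtain ⟨t1, t2, t3, t4, t5, t6, t7⟩ := ht
          dsimp only at *
          exact ⟨t3, t4, t1, t2, t5, t6, by rw [add_comm a u] at t7; exact t7⟩
        · rintro ⟨a, u, v⟩ _; rfl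
        · rintro ⟨a, u, v⟩ _; rfl
        · rintro ⟨a, u, v⟩ _; rfl
      have Pswap : ∀ f : A → A → V,
          (∑ p ∈ PP β, f p.1 p.2) = ∑ p ∈ PP β, f p.2 p.1 := by
        intro f
        refine Finset.sum_nbij' Prod.swap Prod.swap ?_ ?_ ?_ ?_ ?_
        · rintro ⟨a, z⟩ hp
          rw [hPPmem] at hp ⊢
          obtain ⟨k1, k2, k3, k4, k5⟩ := hp
          dsimp only [Prod.swap] at *
          exact ⟨k3, k4, k1, k2, by rw [add_comm]; exact k5⟩
        · rintro ⟨a, z⟩ hp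
          rw [hPPmem] at hp ⊢
          obtain ⟨k1, k2, k3, k4, k5⟩ := hp
          dsimp only [Prod.swap] at *
          exact ⟨k3, k4, k1, k2, by rw [add_comm]; exact k5⟩
        · rintro ⟨a, z⟩ _; rfl
        · rintro ⟨a, z⟩ _; rfl
        · rintro ⟨a, z⟩ _; rfl
      have CF1 : ∀ f : A → A → A → V,
          (∑ p ∈ PP β, ∑ q ∈ PM p.2, f p.1 q.1 q.2)
            = ∑ t ∈ TC.filter (fun t => ¬ t.1 = 0), f t.1 t.2.1 t.2.2 := by
        intro f
        rw [Finset.sum_sigma' (PP β) (fun p => PM p.2) (fun p q => f p.1 q.1 q.2)]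
        refine Finset.sum_nbij' (fun x => (x.1.1, x.2.1, x.2.2))
          (fun t => ⟨(t.1, t.2.1 + t.2.2), (t.2.1, t.2.2)⟩) ?_ ?_ ?_ ?_ ?_
        · rintro ⟨⟨a, z⟩, u, v⟩ hx
          rw [Finset.mem_sigma] at hx
          obtain ⟨k1, k2, k3, k4, k5⟩ := (hPPmem _ _).1 hx.1
          obtain ⟨l1, l2, l3, l4⟩ := (hPMmem _ _).1 hx.2
          rw [Finset.mem_filter, hTCmem]
          dsimp only at *
          exact ⟨⟨k1, l1, l2, l3, fun h => k2 h.1, by rw [add_assoc, l4, k5]⟩, k2⟩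
        · rintro ⟨a, u, v⟩ ht
          rw [Finset.mem_filter, hTCmem] at ht
          obtain ⟨⟨t1, t3, t5, t6, t8, t7⟩, t2⟩ := ht
          dsimp only at *
          rw [Finset.mem_sigma]
          constructor
          · rw [hPPmem]
            exact ⟨t1, t2, hG.add_mem t3 t5, hsum_ne _ _ t3 t5 t6,
              by rw [← add_assoc]; exact t7⟩
          · rw [hPMmem]; exact ⟨t3, t5, t6, rfl⟩
        · rintro ⟨⟨a, z⟩, u, v⟩ hx
          rw [Finset.mem_sigma] at hx
          have huv : u + v = z := ((hPMmem _ _).1 hx.2).2.2.2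
          dsimp only at *
          subst huv
          rfl
        · rintro ⟨a, u, v⟩ ht; rfl
        · rintro ⟨⟨a, z⟩, u, v⟩ hx; rfl
      have CF2 : ∀ f : A → A → A → V,
          (∑ p ∈ PP β, f (0 : A) p.1 p.2)
            = ∑ t ∈ TC.filter (fun t => t.1 = 0), f t.1 t.2.1 t.2.2 := by
        intro f
        refine Finset.sum_nbij' (fun p => ((0 : A), p.1, p.2)) (fun t => (t.2.1, t.2.2))
          ?_ ?_ ?_ ?_ ?_
        · rintro ⟨a, z⟩ hp
          rw [hPPmem] at hp
          obtain ⟨k1, k2, k3, k4, k5⟩ := hp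
          rw [Finset.mem_filter, hTCmem]
          dsimp only at *
          exact ⟨⟨hG.zero_mem, k1, k3, k4, fun h => k2 h.2, by rw [zero_add]; exact k5⟩, rfl⟩
        · rintro ⟨a, u, v⟩ ht
          rw [Finset.mem_filter, hTCmem] at ht
          obtain ⟨⟨t1, t3, t5, t6, t8, t7⟩, t2⟩ := ht
          dsimp only at *
          rw [hPPmem]
          subst t2
          refine ⟨t3, fun h => t8 ⟨rfl, h⟩, t5, t6, by rw [zero_add] at t7; exact t7⟩
        · rintro ⟨a, z⟩ _; rfl
        · rintro ⟨a, u, v⟩ ht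
          rw [Finset.mem_filter] at ht
          have : a = 0 := ht.2
          subst this
          rfl
        · rintro ⟨a, z⟩ hp
          dsimp only
      have CF3 : ∀ f : A → A → A → V,
          (∑ t ∈ TC, f t.1 t.2.1 t.2.2)
            = ∑ p ∈ PM β, ∑ q ∈ (PA p.1).erase ((0 : A), (0 : A)), f q.1 q.2 p.2 := by
        intro f
        rw [Finset.sum_sigma' (PM β) (fun p => (PA p.1).erase ((0 : A), (0 : A)))
          (fun p q => f q.1 q.2 p.2)]
        refine Finset.sum_nbij' (fun t => ⟨(t.1 + t.2.1, t.2.2), (t.1, t.2.1)⟩)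
          (fun x => (x.2.1, x.2.2, x.1.2)) ?_ ?_ ?_ ?_ ?_
        · rintro ⟨a, u, v⟩ ht
          rw [hTCmem] at ht
          obtain ⟨t1, t3, t5, t6, t8, t7⟩ := ht
          dsimp only at *
          rw [Finset.mem_sigma]
          constructor
          · rw [hPMmem]
            exact ⟨hG.add_mem t1 t3, t5, t6, t7⟩
          · rw [Finset.mem_erase, hPAmem]
            refine ⟨?_, t1, t3, rfl⟩
            intro h
            rw [Prod.ext_iff] at h
            exact t8 ⟨h.1, h.2⟩
        · rintro ⟨⟨a, z⟩, u, v⟩ hx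
          rw [Finset.mem_sigma, Finset.mem_erase] at hx
          obtain ⟨hx1, hx2, hx3⟩ := hx
          obtain ⟨k1, k2, k3, k4⟩ := (hPMmem _ _).1 hx1
          obtain ⟨l1, l2, l3⟩ := (hPAmem _ _).1 hx3
          rw [hTCmem]
          dsimp only at *
          refine ⟨l1, l2, k2, k3, ?_, by rw [l3, k4]⟩
          intro h
          exact hx2 (Prod.ext h.1 h.2)
        · rintro ⟨a, u, v⟩ _; rfl
        · rintro ⟨⟨a, z⟩, u, v⟩ hx
          rw [Finset.mem_sigma, Finset.mem_erase] at hx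
          have huv : u + v = a := ((hPAmem _ _).1 hx.2.2).2.2
          dsimp only at *
          subst huv
          rfl
        · rintro ⟨a, u, v⟩ _; rfl
      have Cinner : ∀ p ∈ PM β,
          (∑ q ∈ (PA p.1).erase ((0 : A), (0 : A)), m₁ q.1 (m₁ q.2 (b p.2)))
            = mul (m₀ p.1) (b p.2) - mul (b p.2) (m₀ p.1) := by
        intro p hp
        obtain ⟨h1, h2, h3, h4⟩ := (hPMmem _ _).1 hp
        by_cases h0 : p.1 = 0
        · have hPA0 : PA p.1 = {((0 : A), (0 : A))} := by
            ext q
            rw [hPAmem, Finset.mem_singleton]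
            constructor
            · rintro ⟨k1, k2, k3⟩
              rw [h0] at k3
              have e1 : E q.1 + E q.2 = 0 := by rw [← map_add, k3, map_zero]
              have e2 := hG.nonneg q.1 k1
              have e3 := hG.nonneg q.2 k2
              have e4 : q.1 = 0 := hG.energy_eq_zero q.1 k1 (by linarith)
              have e5 : q.2 = 0 := hG.energy_eq_zero q.2 k2 (by linarith)
              exact Prod.ext e4 e5
            · intro h
              rw [h]
              exact ⟨hG.zero_mem, hG.zero_mem, by rw [add_zero]; exact h0.symm⟩
          rw [hPA0, Finset.erase_singleton, Finset.sum_empty, h0, hm₀_zero, map_zero,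
            LinearMap.zero_apply, map_zero, sub_zero]
        · have hE1 : 0 < E p.1 := hEpos _ h1 h0
          have hE2 : E p.2 < E β := by
            have : E p.1 + E p.2 = E β := by rw [← map_add, h4]
            linarith
          have hbmem := (hIH p.2 h2 h3 hE2).1
          have hq := hb p.1 h1 p.2 (-1) (b p.2) hbmem
          rw [hconvA p.1] at hq
          rw [Finset.erase_eq_of_notMem, hq]
          intro hmem
          obtain ⟨_, _, k3⟩ := (hPAmem _ _).1 hmem
          rw [add_zero] at k3
          exact h0 k3.symm
      -- step A
      have hA : d (m₀ β) = -∑ p ∈ PP β, m₁ p.1 (m₀ p.2) := by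
        have h := ha β hβG
        rw [hconvA β] at h
        have hsplit : PA β = insert ((0 : A), β) (insert (β, (0 : A)) (PP β)) := by
          ext q
          rw [Finset.mem_insert, Finset.mem_insert, hPAmem, hPPmem]
          constructor
          · rintro ⟨k1, k2, k3⟩
            by_cases hq1 : q.1 = 0
            · left; exact Prod.ext hq1 (by rw [← k3, hq1, zero_add])
            by_cases hq2 : q.2 = 0
            · right; left; exact Prod.ext (by rw [← k3, hq2, add_zero]) hq2
            · right; right; exact ⟨k1, hq1, k2, hq2, k3⟩
          · rintro (h | h | ⟨k1, k2, k3, k4, k5⟩)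
            · rw [h]; exact ⟨hG.zero_mem, hβG, zero_add β⟩
            · rw [h]; exact ⟨hβG, hG.zero_mem, add_zero β⟩
            · exact ⟨k1, k3, k5⟩
        have hn1 : ((0 : A), β) ∉ insert (β, (0 : A)) (PP β) := by
          rw [Finset.mem_insert]
          rintro (h | h)
          · exact hβ0 (Prod.ext_iff.1 h).2
          · rw [hPPmem] at h; exact h.2.1 rfl
        have hn2 : (β, (0 : A)) ∉ PP β := by
          rw [hPPmem]; rintro ⟨_, _, _, h4, _⟩; exact h4 rfl
        rw [hsplit, Finset.sum_insert hn1, Finset.sum_insert hn2] at h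
        simp only [hm₁_zero, hm₀_zero, map_zero, zero_add] at h
        exact eq_neg_of_add_eq_zero_left h
      have hA' : d (m₀ β) = (∑ p ∈ PP β, ∑ q ∈ PM p.2, m₁ p.1 (m₁ q.1 (b q.2)))
          + (∑ p ∈ PP β, ∑ q ∈ PP p.2, m₁ p.1 (mul (b q.1) (b q.2))) := by
        rw [hA, ← Finset.sum_add_distrib, ← Finset.sum_neg_distrib]
        apply Finset.sum_congr rfl
        intro p hp
        obtain ⟨f1, f2, f3, f4, f5, f6, f7⟩ := hPPfacts β p hp
        rw [hm0eq p.2 f3 f4 f7]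
        simp only [map_sub, map_neg, map_sum]
        abel
      have hCC : (∑ p ∈ PP β, ∑ q ∈ PM p.2, m₁ p.1 (m₁ q.1 (b q.2)))
          = (∑ p ∈ PP β, (mul (m₀ p.1) (b p.2) - mul (b p.2) (m₀ p.1)))
            - ∑ p ∈ PP β, d (m₁ p.1 (b p.2)) := by
        have e1 := CF1 (fun x u v => m₁ x (m₁ u (b v)))
        have e2 : (∑ p ∈ PP β, d (m₁ p.1 (b p.2)))
            = ∑ t ∈ TC.filter (fun t => t.1 = 0), m₁ t.1 (m₁ t.2.1 (b t.2.2)) := by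
          rw [← CF2 (fun x u v => m₁ x (m₁ u (b v)))]
          apply Finset.sum_congr rfl
          intro p hp
          rw [hm₁_zero]
        have e3 : (∑ p ∈ PP β, ∑ q ∈ PM p.2, m₁ p.1 (m₁ q.1 (b q.2)))
            + (∑ p ∈ PP β, d (m₁ p.1 (b p.2)))
            = ∑ t ∈ TC, m₁ t.1 (m₁ t.2.1 (b t.2.2)) := by
          rw [e1, e2, add_comm, Finset.sum_filter_add_sum_filter_not]
        rw [CF3 (fun x u v => m₁ x (m₁ u (b v))), Finset.sum_congr rfl Cinner] at e3
        have e5 : (∑ p ∈ PM β, (mul (m₀ p.1) (b p.2) - mul (b p.2) (m₀ p.1)))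
            = ∑ p ∈ PP β, (mul (m₀ p.1) (b p.2) - mul (b p.2) (m₀ p.1)) := by
          rw [hPMins β hβG hβ0, Finset.sum_insert (h0γnotPP β)]
          simp [hm₀_zero]
        rw [e5] at e3
        calc (∑ p ∈ PP β, ∑ q ∈ PM p.2, m₁ p.1 (m₁ q.1 (b q.2)))
            = ((∑ p ∈ PP β, ∑ q ∈ PM p.2, m₁ p.1 (m₁ q.1 (b q.2)))
                + (∑ p ∈ PP β, d (m₁ p.1 (b p.2))))
              - ∑ p ∈ PP β, d (m₁ p.1 (b p.2)) := by abel
        _ = _ := by rw [e3]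
      have hEE : (∑ p ∈ PP β, ∑ q ∈ PP p.2, m₁ p.1 (mul (b q.1) (b q.2)))
          = (∑ t ∈ TT, mul (m₁ t.1 (b t.2.1)) (b t.2.2))
            - ∑ t ∈ TT, mul (b t.2.1) (m₁ t.1 (b t.2.2)) := by
        rw [← F1 (fun x u v => mul (m₁ x (b u)) (b v)),
          ← F1 (fun x u v => mul (b u) (m₁ x (b v))), ← Finset.sum_sub_distrib]
        apply Finset.sum_congr rfl
        intro p hp
        rw [← Finset.sum_sub_distrib]
        apply Finset.sum_congr rfl
        intro q hq
        obtain ⟨f1, f2, f3, f4, f5, f6, f7⟩ := hPPfacts β p hp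
        obtain ⟨g1, g2, g3, g4, g5, g6, g7⟩ := hPPfacts p.2 q hq
        exact hder p.1 f1 q.1 q.2 (b q.1) (b q.2)
          (hIH q.1 g1 g2 (lt_trans g6 f7)).1 (hIH q.2 g3 g4 (lt_trans g7 f7)).1
      have hDD : (∑ p ∈ PP β, d (mul (b p.1) (b p.2)))
          = -(∑ p ∈ PP β, mul (m₀ p.1) (b p.2))
            - (∑ t ∈ TT, mul (m₁ t.1 (b t.2.1)) (b t.2.2))
            - (∑ t ∈ TT, mul (b t.1) (mul (b t.2.1) (b t.2.2)))
            + (∑ p ∈ PP β, mul (b p.2) (m₀ p.1))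
            + (∑ t ∈ TT, mul (b t.2.1) (m₁ t.1 (b t.2.2)))
            + (∑ t ∈ TT, mul (b t.1) (mul (b t.2.1) (b t.2.2))) := by
        have h1 : ∀ p ∈ PP β, d (mul (b p.1) (b p.2))
            = ((-(mul (m₀ p.1) (b p.2)) - (∑ q ∈ PP p.1, mul (m₁ q.1 (b q.2)) (b p.2))
                - ∑ q ∈ PP p.1, mul (mul (b q.1) (b q.2)) (b p.2))
              + ((mul (b p.1) (m₀ p.2)) + (∑ q ∈ PP p.2, mul (b p.1) (m₁ q.1 (b q.2)))
                + ∑ q ∈ PP p.2, mul (b p.1) (mul (b q.1) (b q.2)))) := by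
          intro p hp
          obtain ⟨f1, f2, f3, f4, f5, f6, f7⟩ := hPPfacts β p hp
          have hb1 := (hIH p.1 f1 f2 f6).1
          have hb2 := (hIH p.2 f3 f4 f7).1
          have hstep := hder 0 hG.zero_mem p.1 p.2 (b p.1) (b p.2) hb1 hb2
          rw [hm₁_zero] at hstep
          rw [hstep, hdb p.1 f1 f2 f6, hdb p.2 f3 f4 f7]
          simp only [map_sub, map_neg, map_sum, LinearMap.sub_apply, LinearMap.neg_apply,
            LinearMap.sum_apply]
          abel
        rw [Finset.sum_congr rfl h1]
        simp only [Finset.sum_add_distrib, Finset.sum_sub_distrib, Finset.sum_neg_distrib]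
        rw [F2 (fun x u v => mul (m₁ x (b u)) (b v))]
        rw [F1 (fun x u v => mul (b x) (m₁ u (b v)))]
        rw [F1 (fun x u v => mul (b x) (mul (b u) (b v)))]
        rw [F2 (fun x u v => mul (mul (b x) (b u)) (b v))]
        have hAs : (∑ t ∈ TT, mul (mul (b t.1) (b t.2.1)) (b t.2.2))
            = ∑ t ∈ TT, mul (b t.1) (mul (b t.2.1) (b t.2.2)) :=
          Finset.sum_congr rfl (fun t _ => hassoc _ _ _)
        rw [hAs]
        have hPs : (∑ p ∈ PP β, mul (b p.1) (m₀ p.2)) = ∑ p ∈ PP β, mul (b p.2) (m₀ p.1) :=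
          Pswap (fun x z => mul (b x) (m₀ z))
        rw [hPs]
        have hFs : (∑ t ∈ TT, mul (b t.1) (m₁ t.2.1 (b t.2.2)))
            = ∑ t ∈ TT, mul (b t.2.1) (m₁ t.1 (b t.2.2)) :=
          Fswap (fun x u v => mul (b x) (m₁ u (b v)))
        rw [hFs]
        abel
      -- the obstruction is a cycle
      have hdo : d (m₀ β + (∑ p ∈ PP β, m₁ p.1 (b p.2))
          + ∑ p ∈ PP β, mul (b p.1) (b p.2)) = 0 := by
        rw [map_add, map_add, map_sum, map_sum, hA', hCC, hEE, hDD,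
          Finset.sum_sub_distrib]
        abel
      -- the obstruction lies in degree (β, -2)
      have homem : (m₀ β + (∑ p ∈ PP β, m₁ p.1 (b p.2))
          + ∑ p ∈ PP β, mul (b p.1) (b p.2)) ∈ 𝒞 β (-2) := by
        refine Submodule.add_mem _ (Submodule.add_mem _ (hm₀_mem β hβG hβ0)
          (Submodule.sum_mem _ ?_)) (Submodule.sum_mem _ ?_)
        · intro p hp
          obtain ⟨f1, f2, f3, f4, f5, f6, f7⟩ := hPPfacts β p hp
          have h := hm₁_deg p.1 f1 f2 p.2 (-1) (b p.2) (hIH p.2 f3 f4 f7).1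
          have he : p.2 + p.1 = β := by rw [add_comm]; exact f5
          rw [he] at h
          norm_num at h
          exact h
        · intro p hp
          obtain ⟨f1, f2, f3, f4, f5, f6, f7⟩ := hPPfacts β p hp
          have h := hmul_deg p.1 p.2 (-1) (-1) (b p.1) (hIH p.1 f1 f2 f6).1
            (b p.2) (hIH p.2 f3 f4 f7).1
          rw [f5] at h
          norm_num at h
          exact h
      have hex : ∃ y, y ∈ 𝒞 β (-1) ∧ d y = -(m₀ β + (∑ p ∈ PP β, m₁ p.1 (b p.2))
          + ∑ p ∈ PP β, mul (b p.1) (b p.2)) := by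
        obtain ⟨y, hy1, hy2⟩ := hH β hβG hβ0 _ (Submodule.neg_mem _ homem)
          (by rw [map_neg, hdo, neg_zero])
        exact ⟨y, hy1, hy2⟩
      -- identify b β
      have heq := BChainAux.bChain_eq E G 𝒞 mul d m₁ m₀ β
      rw [← hbb] at heq
      have hcong : BChainAux.obstr G mul m₁ m₀
          (fun γ => if h' : BChainAux.ncB E G γ < BChainAux.ncB E G β then b γ else 0) β
          = m₀ β + (∑ p ∈ PP β, m₁ p.1 (b p.2)) + ∑ p ∈ PP β, mul (b p.1) (b p.2) := by
        have hlt : ∀ q : A × A,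
            q ∈ {q : A × A | q.1 ∈ G ∧ q.1 ≠ 0 ∧ q.2 ∈ G ∧ q.2 ≠ 0 ∧ q.1 + q.2 = β} →
            (BChainAux.ncB E G q.1 < BChainAux.ncB E G β
              ∧ BChainAux.ncB E G q.2 < BChainAux.ncB E G β) := by
          rintro ⟨x, z⟩ ⟨k1, k2, k3, k4, k5⟩
          have e1 : 0 < E x := hEpos _ k1 k2
          have e2 : 0 < E z := hEpos _ k3 k4
          have e3 : E x + E z = E β := by rw [← map_add, k5]
          exact ⟨BChainAux.ncB_lt E G hG k1 (by linarith),
            BChainAux.ncB_lt E G hG k3 (by linarith)⟩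
        unfold BChainAux.obstr
        congr 1
        · congr 1
          rw [← hconvP β]
          apply finsum_mem_congr rfl
          intro q hq
          exact congrArg _ (dif_pos (hlt q hq).2)
        · rw [← hconvP β]
          apply finsum_mem_congr rfl
          intro q hq
          exact congrArg₂ (fun x y => mul x y) (dif_pos (hlt q hq).1) (dif_pos (hlt q hq).2)
      rw [hcong, dif_pos hex] at heq
      obtain ⟨hy1, hy2⟩ := hex.choose_spec
      rw [← heq] at hy1 hy2
      refine ⟨hy1, ?_⟩
      rw [hPMins β hβG hβ0, Finset.sum_insert (h0γnotPP β)]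
      simp only [hm₁_zero]
      rw [hy2]
      abel
  refine ⟨b, fun β h1 h2 => (main _ β (Nat.lt_succ_self _) h1 h2).1, fun β h1 h2 => ?_⟩
  have h := (main _ β (Nat.lt_succ_self _) h1 h2).2
  rw [hconvM β, hconvP β]
  exact h
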